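/- arXiv:2401.11047 — 5 statements merged into one kernel-verified Lean document; each statement's English description precedes it below -/
import Mathlib

section
/- For x ∈ ℤ and 0 < |k| < 1, (1/(2π)) ∫₀^{2π} e^{-i x t} / (2 cos t - k - 1/k) dt = k^{|x|} / (k - 1/k). -/
open Complex Real intervalIntegral

lemma key (k : ℂ) (hk0 : k ≠ 0) (hk1 : ‖k‖ < 1) (n : ℕ) :
    ∫ t in (0 : ℝ)..(2 * Real.pi),
        Complex.exp (Complex.I * (n : ℂ) * (t : ℂ)) /
          (2 * Complex.cos (t : ℂ) - k - 1 / k)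
      = 2 * Real.pi * k ^ n / (k - 1 / k) := by
  have hinv : (1 : ℝ) < ‖1 / k‖ := by
    rw [norm_div, norm_one]
    exact (one_lt_div (norm_pos_iff.mpr hk0)).mpr hk1
  set f : ℂ → ℂ := fun z => -Complex.I * z ^ n / (z - 1 / k) with hf
  have hd : DifferentiableOn ℂ f (Metric.closedBall 0 1) := by
    apply DifferentiableOn.div
    · fun_prop
    · fun_prop
    · intro z hz
      simp only [Metric.mem_closedBall, dist_zero_right] at hz
      intro h
      rw [sub_eq_zero] at h
      rw [h] at hz
      linarith
  have hw : k ∈ Metric.ball (0:ℂ) 1 := by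
    simpa [Metric.mem_ball, dist_zero_right] using hk1
  have hC := hd.circleIntegral_sub_inv_smul hw
  have hkk : k - 1 / k ≠ 0 := by
    intro h
    rw [sub_eq_zero] at h
    rw [← h] at hinv
    linarith
  have hpt : ∀ t : ℝ, deriv (circleMap 0 1) t •
      ((circleMap 0 1 t - k)⁻¹ • f (circleMap 0 1 t)) =
      Complex.exp (Complex.I * (n : ℂ) * (t : ℂ)) /
        (2 * Complex.cos (t : ℂ) - k - 1 / k) := by
    intro t
    have hzmap : circleMap 0 1 t = Complex.exp (t * Complex.I) := by
      simp [circleMap]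
    rw [deriv_circleMap, hzmap, hf]
    set z := Complex.exp (t * Complex.I) with hz
    have hz0 : z ≠ 0 := Complex.exp_ne_zero _
    have hzabs : ‖z‖ = 1 := by
      rw [hz, Complex.norm_exp]
      simp
    have hzk : z - k ≠ 0 := by
      intro h
      rw [sub_eq_zero] at h
      rw [← h, hzabs] at hk1
      linarith
    have hzk' : z - 1 / k ≠ 0 := by
      intro h
      rw [sub_eq_zero] at h
      rw [← h, hzabs] at hinv
      linarith
    have hexpn : Complex.exp (Complex.I * (n : ℂ) * (t : ℂ)) = z ^ n := by
      rw [hz, ← Complex.exp_nat_mul]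
      ring_nf
    have hcos : 2 * Complex.cos (t : ℂ) - k - 1 / k = (z - k) * (z - 1 / k) / z := by
      have hn : Complex.exp (-(t : ℂ) * Complex.I) = z⁻¹ := by
        rw [hz, ← Complex.exp_neg]
        congr 1
        ring
      rw [Complex.cos, hn, ← hz]
      field_simp
      ring
    rw [hexpn, hcos]
    simp only [smul_eq_mul]
    field_simp
    linear_combination (-1 / (z * k - 1)) * Complex.I_sq
  calc ∫ t in (0:ℝ)..(2 * Real.pi),
      Complex.exp (Complex.I * (n : ℂ) * (t : ℂ)) /
        (2 * Complex.cos (t : ℂ) - k - 1 / k)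
      = ∮ z in C(0, 1), (z - k)⁻¹ • f z := by
        rw [circleIntegral]
        exact intervalIntegral.integral_congr fun t _ => (hpt t).symm
    _ = (2 * Real.pi * Complex.I : ℂ) • f k := hC
    _ = 2 * Real.pi * k ^ n / (k - 1 / k) := by
        rw [hf, smul_eq_mul]
        field_simp
        linear_combination (-1 / (k * k - 1)) * Complex.I_sq

lemma refl_int (k : ℂ) (x : ℤ) :
    (∫ t in (0 : ℝ)..(2 * Real.pi),
        Complex.exp (-Complex.I * (x : ℂ) * (t : ℂ)) /
          (2 * Complex.cos (t : ℂ) - k - 1 / k))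
    = ∫ t in (0 : ℝ)..(2 * Real.pi),
        Complex.exp (Complex.I * (x : ℂ) * (t : ℂ)) /
          (2 * Complex.cos (t : ℂ) - k - 1 / k) := by
  have h := intervalIntegral.integral_comp_sub_left (a := (0:ℝ)) (b := 2 * Real.pi)
    (fun t : ℝ => Complex.exp (-Complex.I * (x : ℂ) * (t : ℂ)) /
      (2 * Complex.cos (t : ℂ) - k - 1 / k)) (2 * Real.pi)
  simp only [sub_self, sub_zero] at h
  rw [← h]
  apply intervalIntegral.integral_congr
  intro t _
  simp only
  push_cast
  rw [Complex.cos_two_pi_sub]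
  congr 1
  have heq : -Complex.I * (x : ℂ) * (2 * (Real.pi : ℂ) - (t : ℂ))
      = ((-x : ℤ) : ℂ) * (2 * (Real.pi : ℂ) * Complex.I) + Complex.I * (x : ℂ) * (t : ℂ) := by
    push_cast
    ring
  rw [heq, Complex.exp_add, Complex.exp_int_mul_two_pi_mul_I, one_mul]

theorem stmt_2 (k : ℂ) (hk0 : k ≠ 0) (hk1 : ‖k‖ < 1) (x : ℤ) :
    (1 / (2 * (Real.pi : ℂ))) *
        ∫ t in (0 : ℝ)..(2 * Real.pi),
          Complex.exp (-Complex.I * (x : ℂ) * (t : ℂ)) /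
            (2 * Complex.cos (t : ℂ) - k - 1 / k)
      = k ^ x.natAbs / (k - 1 / k) := by
  have hpi : (2 * (Real.pi : ℂ)) ≠ 0 := by
    simp [Real.pi_ne_zero]
  rcases le_or_gt x 0 with hx | hx
  · have hxn : (x : ℂ) = -(x.natAbs : ℂ) := by
      have h3 : x = -(x.natAbs : ℤ) := by omega
      exact_mod_cast h3
    have : (∫ t in (0 : ℝ)..(2 * Real.pi),
        Complex.exp (-Complex.I * (x : ℂ) * (t : ℂ)) /
          (2 * Complex.cos (t : ℂ) - k - 1 / k))
      = ∫ t in (0 : ℝ)..(2 * Real.pi),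
        Complex.exp (Complex.I * (x.natAbs : ℂ) * (t : ℂ)) /
          (2 * Complex.cos (t : ℂ) - k - 1 / k) := by
      apply intervalIntegral.integral_congr
      intro t _
      rw [hxn]
      ring_nf
    rw [this, key k hk0 hk1 x.natAbs]
    rw [show 2 * (Real.pi : ℂ) * k ^ x.natAbs / (k - 1 / k)
        = (2 * (Real.pi : ℂ)) * (k ^ x.natAbs / (k - 1 / k)) by ring,
      one_div, inv_mul_cancel_left₀ hpi]
  · have hxn : (x : ℂ) = (x.natAbs : ℂ) := by
      rw [show x.natAbs = x.toNat by omega]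
      have h3 : ((x.toNat : ℤ)) = x := Int.toNat_of_nonneg hx.le
      exact_mod_cast h3.symm
    rw [refl_int]
    have : (∫ t in (0 : ℝ)..(2 * Real.pi),
        Complex.exp (Complex.I * (x : ℂ) * (t : ℂ)) /
          (2 * Complex.cos (t : ℂ) - k - 1 / k))
      = ∫ t in (0 : ℝ)..(2 * Real.pi),
        Complex.exp (Complex.I * (x.natAbs : ℂ) * (t : ℂ)) /
          (2 * Complex.cos (t : ℂ) - k - 1 / k) := by
      apply intervalIntegral.integral_congr
      intro t _
      rw [hxn]
    rw [this, key k hk0 hk1 x.natAbs]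
    rw [show 2 * (Real.pi : ℂ) * k ^ x.natAbs / (k - 1 / k)
        = (2 * (Real.pi : ℂ)) * (k ^ x.natAbs / (k - 1 / k)) by ring,
      one_div, inv_mul_cancel_left₀ hpi]
end

section
/- With R₀(x,x';k) = (k^{|x-x'|} - k^{x+x'})/(k - 1/k), for all x ≤ x' and all k ∈ ℂ with |k| ≤ 1 one has |R₀(x,x';k)| ≤ x · |k|^{|x-x'|+1}. -/
/-- The Dirichlet half-line free resolvent kernel
R₀(x,x';k) = (k^{|x-x'|} - k^{x+x'})/(k - 1/k). -/
noncomputable def R0 (k : ℂ) (x x' : ℕ) : ℂ :=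
  (k ^ Nat.dist x x' - k ^ (x + x')) / (k - 1 / k)

/- For x ≤ x' (x ≥ 1) and |k| ≤ 1: |R₀(x,x';k)| ≤ x · |k|^{|x-x'|+1}. -/
theorem stmt_4 (k : ℂ) (hk : ‖k‖ ≤ 1) (x x' : ℕ) (hx : 1 ≤ x) (hxx : x ≤ x') :
    ‖R0 k x x'‖ ≤ (x : ℝ) * ‖k‖ ^ (x' - x + 1) := by
  obtain ⟨d, rfl⟩ : ∃ d, x' = x + d := ⟨x' - x, by omega⟩
  have hd : x + d - x + 1 = d + 1 := by omega
  rw [hd]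
  by_cases hk0 : k = 0
  · subst hk0
    simp [R0]
  by_cases hk1 : k ^ 2 = 1
  · have hden : k - 1 / k = 0 := by
      field_simp
      linear_combination hk1
    rw [R0, hden, div_zero, norm_zero]
    positivity
  · have hdist : Nat.dist x (x + d) = d := by
      rw [Nat.dist_eq_sub_of_le (Nat.le_add_right x d)]
      omega
    have h1 : k ^ 2 - 1 ≠ 0 := sub_ne_zero.mpr hk1
    have hden : k - 1 / k ≠ 0 := by
      intro h
      apply h1
      have := congrArg (· * k) h
      field_simp at this
      linear_combination this
    have key : R0 k x (x + d) = -(k ^ (d + 1) * ∑ j ∈ Finset.range x, (k ^ 2) ^ j) := by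
      rw [R0, hdist, geom_sum_eq hk1, div_eq_iff hden]
      field_simp
      ring
    rw [key, norm_neg, norm_mul, norm_pow, mul_comm ((x : ℝ))]
    gcongr
    calc ‖∑ j ∈ Finset.range x, (k ^ 2) ^ j‖
        ≤ ∑ j ∈ Finset.range x, ‖(k ^ 2) ^ j‖ :=
          norm_sum_le (Finset.range x) fun j => (k ^ 2) ^ j
      _ ≤ ∑ j ∈ Finset.range x, 1 := by
          refine Finset.sum_le_sum fun j _ => ?_
          rw [norm_pow, norm_pow]
          exact pow_le_one₀ (by positivity) (pow_le_one₀ (norm_nonneg k) hk)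
      _ = (x : ℝ) := by simp
end

section
/- Let f, g be sequences with ‖f‖₁² := Σ_{x≥1} x² |f_x|² < ∞ and similarly for g, and 0 < |k| < 1. Then the operator with kernel f_x R₀(x,x';k) g_{x'}, where R₀(x,x';k) = (k^{|x-x'|} - k^{x+x'})/(k - 1/k), is Hilbert–Schmidt with norm at most √2 |k| ‖f‖₁ ‖g‖₁. -/
lemma R0_eq (k : ℂ) (hk0 : k ≠ 0) (hk1 : ‖k‖ < 1) (x x' : ℕ) :
    R0 k x x' = -(k ^ (Nat.dist x x' + 1)) * ∑ i ∈ Finset.range (min x x'), (k^2) ^ i := by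
  have hsum : x + x' = Nat.dist x x' + 2 * min x x' := by
    rcases le_total x x' with h | h <;> simp [Nat.dist, Nat.min_def, h] <;> omega
  have hk2 : k ^ 2 ≠ 1 := by
    intro h
    have : ‖k ^ 2‖ = 1 := by rw [h]; simp
    rw [norm_pow] at this
    nlinarith [norm_nonneg k]
  have hk21 : k ^ 2 - 1 ≠ 0 := sub_ne_zero.mpr hk2
  have hden : k - 1 / k = (k ^ 2 - 1) / k := by field_simp
  set S := ∑ i ∈ Finset.range (min x x'), (k^2) ^ i with hS
  have hgeo : S * (k ^ 2 - 1) = k ^ (2 * min x x') - 1 := by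
    rw [pow_mul]; exact geom_sum_mul (k ^ 2) (min x x')
  rw [R0, hsum, pow_add k (Nat.dist x x'), pow_mul, hden, div_div_eq_mul_div,
    div_eq_iff hk21, pow_succ]
  linear_combination (k ^ Nat.dist x x' * k) * hgeo

lemma R0_abs_le (k : ℂ) (hk0 : k ≠ 0) (hk1 : ‖k‖ < 1) (x x' : ℕ) :
    ‖R0 k x x'‖ ≤ ‖k‖ * x * x' := by
  have hknn := norm_nonneg k
  rw [R0_eq k hk0 hk1 x x', norm_mul, norm_neg, norm_pow]
  have h1 : ‖k‖ ^ (Nat.dist x x' + 1) ≤ ‖k‖ := by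
    calc ‖k‖ ^ (Nat.dist x x' + 1)
        = ‖k‖ ^ Nat.dist x x' * ‖k‖ := pow_succ _ _
      _ ≤ 1 * ‖k‖ := by
          gcongr
          exact pow_le_one₀ hknn hk1.le
      _ = ‖k‖ := one_mul _
  have h2 : ‖∑ i ∈ Finset.range (min x x'), (k^2) ^ i‖ ≤ (min x x' : ℝ) := by
    calc ‖∑ i ∈ Finset.range (min x x'), (k^2) ^ i‖
        ≤ ∑ i ∈ Finset.range (min x x'), ‖(k^2) ^ i‖ := by
          exact norm_sum_le _ _
      _ ≤ ∑ i ∈ Finset.range (min x x'), 1 := by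
          apply Finset.sum_le_sum
          intro i _
          rw [norm_pow, norm_pow]
          exact pow_le_one₀ (pow_nonneg hknn 2) (by nlinarith)
      _ = (min x x' : ℝ) := by simp
  have h3 : (min x x' : ℝ) ≤ (x : ℝ) * x' := by
    rcases Nat.eq_zero_or_pos x' with h | h
    · simp [h]
    · have : min x x' ≤ x * x' := le_trans (min_le_left _ _) (Nat.le_mul_of_pos_right _ h)
      exact_mod_cast this
  calc ‖k‖ ^ (Nat.dist x x' + 1) *
        ‖∑ i ∈ Finset.range (min x x'), (k^2) ^ i‖
      ≤ ‖k‖ * (min x x' : ℝ) := by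
        apply mul_le_mul h1 h2 (norm_nonneg _) hknn
    _ ≤ ‖k‖ * ((x : ℝ) * x') := by gcongr
    _ = ‖k‖ * x * x' := by ring

/- Weighted Hilbert–Schmidt bound: if ‖f‖₁² = Σ x²|f_x|² < ∞ and likewise for g,
and 0 < |k| < 1, then the operator with kernel f_x R₀(x,x';k) g_{x'} is
Hilbert–Schmidt with norm ≤ √2 |k| ‖f‖₁ ‖g‖₁ (squared form). -/
theorem stmt_8 (f g : ℕ → ℂ) (k : ℂ) (hk0 : k ≠ 0) (hk1 : ‖k‖ < 1)
    (hf : Summable fun x : ℕ => (x : ℝ) ^ 2 * ‖f x‖ ^ 2)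
    (hg : Summable fun x : ℕ => (x : ℝ) ^ 2 * ‖g x‖ ^ 2) :
    (∑' x : ℕ, ∑' x' : ℕ, ‖f x * R0 k x x' * g x'‖ ^ 2) ≤
      2 * ‖k‖ ^ 2 *
        (∑' x : ℕ, (x : ℝ) ^ 2 * ‖f x‖ ^ 2) *
        (∑' x : ℕ, (x : ℝ) ^ 2 * ‖g x‖ ^ 2) := by
  set C := ‖k‖ ^ 2 with hC
  set F : ℕ → ℝ := fun x => (x : ℝ) ^ 2 * ‖f x‖ ^ 2 with hF
  set G : ℕ → ℝ := fun x => (x : ℝ) ^ 2 * ‖g x‖ ^ 2 with hG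
  have hCnn : 0 ≤ C := sq_nonneg _
  have hFnn : ∀ x, 0 ≤ F x := fun x => mul_nonneg (sq_nonneg _) (sq_nonneg _)
  have hGnn : ∀ x, 0 ≤ G x := fun x => mul_nonneg (sq_nonneg _) (sq_nonneg _)
  have hSf : 0 ≤ ∑' x, F x := tsum_nonneg hFnn
  have hSg : 0 ≤ ∑' x, G x := tsum_nonneg hGnn
  have key : ∀ x x', ‖f x * R0 k x x' * g x'‖ ^ 2 ≤ C * F x * G x' := by
    intro x x'
    have h1 : ‖f x * R0 k x x' * g x'‖
        ≤ ‖f x‖ * (‖k‖ * x * x') * ‖g x'‖ := by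
      rw [norm_mul, norm_mul]
      exact mul_le_mul_of_nonneg_right
        (mul_le_mul_of_nonneg_left (R0_abs_le k hk0 hk1 x x') (norm_nonneg _))
        (norm_nonneg _)
    have h2 := pow_le_pow_left₀ (norm_nonneg _) h1 2
    calc ‖f x * R0 k x x' * g x'‖ ^ 2
        ≤ (‖f x‖ * (‖k‖ * x * x') * ‖g x'‖) ^ 2 := h2
      _ = C * F x * G x' := by simp only [hC, hF, hG]; ring
  have hterm_nn : ∀ x x', (0:ℝ) ≤ ‖f x * R0 k x x' * g x'‖ ^ 2 :=
    fun _ _ => sq_nonneg _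
  have hinner_summ : ∀ x, Summable fun x' => ‖f x * R0 k x x' * g x'‖ ^ 2 := by
    intro x
    exact Summable.of_nonneg_of_le (hterm_nn x) (key x) ((hg.mul_left _))
  have hinner : ∀ x, (∑' x', ‖f x * R0 k x x' * g x'‖ ^ 2)
      ≤ C * F x * (∑' x', G x') := by
    intro x
    calc (∑' x', ‖f x * R0 k x x' * g x'‖ ^ 2)
        ≤ ∑' x', C * F x * G x' :=
          Summable.tsum_le_tsum (key x) (hinner_summ x) (hg.mul_left _)
      _ = C * F x * (∑' x', G x') := tsum_mul_left
  have hbsumm : Summable fun x => C * F x * (∑' x', G x') := by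
    have : (fun x => C * F x * (∑' x', G x')) = fun x => (C * (∑' x', G x')) * F x := by
      funext x; ring
    rw [this]
    exact hf.mul_left _
  have houter_summ : Summable fun x => ∑' x', ‖f x * R0 k x x' * g x'‖ ^ 2 :=
    Summable.of_nonneg_of_le (fun x => tsum_nonneg (hterm_nn x)) hinner hbsumm
  calc (∑' x, ∑' x', ‖f x * R0 k x x' * g x'‖ ^ 2)
      ≤ ∑' x, C * F x * (∑' x', G x') := Summable.tsum_le_tsum hinner houter_summ hbsumm
    _ = (C * (∑' x', G x')) * (∑' x, F x) := by
        rw [show (fun x => C * F x * (∑' x', G x')) = fun x => (C * (∑' x', G x')) * F x from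
          by funext x; ring]
        exact tsum_mul_left
    _ ≤ 2 * C * (∑' x, F x) * (∑' x, G x) := by nlinarith [mul_nonneg (mul_nonneg hCnn hSf) hSg]
end

section
/- Under the self-adjoint finitely supported setting, the Jost matrix ψ(k) = f_0(k) satisfies the symmetry ψ(k) ψ(1/\bar k)^* = ψ(1/k) ψ(\bar k)^* for all k ≠ 0, and consequently the S-matrix S(k) = ψ(k)^{-1} ψ(1/k) satisfies S(\bar k) = S(k)^* = S(k)^{-1} for |k| = 1. -/
open Matrix

private noncomputable def phiA {d : ℕ} (a b : ℕ → Matrix (Fin d) (Fin d) ℂ) (z : ℂ) :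
    ℕ → Matrix (Fin d) (Fin d) ℂ
  | 0 => 0
  | 1 => 1
  | (x+2) => (a (x+1))⁻¹ *
      (z • phiA a b z (x+1) - b (x+1) * phiA a b z (x+1) - a x * phiA a b z x)

private lemma wronskian_const {d : ℕ} (a b : ℕ → Matrix (Fin d) (Fin d) ℂ) (z : ℂ)
    (L R : ℕ → Matrix (Fin d) (Fin d) ℂ)
    (hL : ∀ x, L x * a x + L (x+2) * a (x+1) + L (x+1) * b (x+1) = z • L (x+1))
    (hR : ∀ x, a x * R x + a (x+1) * R (x+2) + b (x+1) * R (x+1) = z • R (x+1)) :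
    ∀ x, L x * (a x * R (x+1)) - L (x+1) * (a x * R x)
      = L 0 * (a 0 * R 1) - L 1 * (a 0 * R 0) := by
  intro x
  induction x with
  | zero => rfl
  | succ n ih =>
    show L (n+1) * (a (n+1) * R (n+2)) - L (n+2) * (a (n+1) * R (n+1))
        = L 0 * (a 0 * R 1) - L 1 * (a 0 * R 0)
    rw [← ih]
    have e1 : a (n+1) * R (n+2) = z • R (n+1) - a n * R n - b (n+1) * R (n+1) := by
      rw [sub_sub, eq_sub_iff_add_eq, ← hR n]; abel
    have e2 : L (n+2) * a (n+1) = z • L (n+1) - L n * a n - L (n+1) * b (n+1) := by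
      rw [sub_sub, eq_sub_iff_add_eq, ← hL n]; abel
    have e2' : L (n+2) * (a (n+1) * R (n+1))
        = (z • L (n+1) - L n * a n - L (n+1) * b (n+1)) * R (n+1) := by
      rw [← mul_assoc, e2]
    rw [e1, e2']
    simp only [mul_sub, sub_mul, smul_mul_assoc, mul_smul_comm, mul_assoc]
    abel

private lemma backward_unique {d : ℕ} (a b : ℕ → Matrix (Fin d) (Fin d) ℂ) (z : ℂ)
    (hainv : ∀ x, IsUnit (a x).det)
    (R S : ℕ → Matrix (Fin d) (Fin d) ℂ)
    (hR : ∀ x, a x * R x + a (x+1) * R (x+2) + b (x+1) * R (x+1) = z • R (x+1))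
    (hS : ∀ x, a x * S x + a (x+1) * S (x+2) + b (x+1) * S (x+1) = z • S (x+1))
    (n : ℕ) (h1 : R (n+1) = S (n+1)) (h2 : R (n+2) = S (n+2)) :
    R 0 = S 0 := by
  have key : ∀ j, R (n+1-j) = S (n+1-j) ∧ R (n+1-j+1) = S (n+1-j+1) := by
    intro j
    induction j with
    | zero => exact ⟨h1, h2⟩
    | succ j ih =>
      rcases Nat.lt_or_ge j (n+1) with hj | hj
      · obtain ⟨m, hm⟩ : ∃ m, n+1-j = m+1 := ⟨n-j, by omega⟩
        have hm' : n+1-(j+1) = m := by omega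
        rw [hm] at ih
        rw [hm']
        have ih1 : R (m+1) = S (m+1) := ih.1
        have ih2 : R (m+2) = S (m+2) := ih.2
        refine ⟨?_, ih1⟩
        have eR := hR m
        have eS := hS m
        rw [ih1, ih2] at eR
        have e := eR.trans eS.symm
        have e2 : a m * R m = a m * S m := add_right_cancel (add_right_cancel e)
        calc R m = (1 : Matrix (Fin d) (Fin d) ℂ) * R m := (one_mul _).symm
          _ = ((a m)⁻¹ * a m) * R m := by rw [nonsing_inv_mul _ (hainv m)]
          _ = (a m)⁻¹ * (a m * S m) := by rw [mul_assoc, e2]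
          _ = ((a m)⁻¹ * a m) * S m := by rw [mul_assoc]
          _ = S m := by rw [nonsing_inv_mul _ (hainv m), one_mul]
      · have h0 : n+1-j = 0 := by omega
        have h0' : n+1-(j+1) = 0 := by omega
        rw [h0] at ih; rw [h0']; exact ih
  have := (key (n+1)).1
  have h00 : n+1-(n+1) = 0 := by omega
  rwa [h00] at this

private lemma sym_aux {d : ℕ} (p : ℕ) (a b : ℕ → Matrix (Fin d) (Fin d) ℂ)
    (ha : ∀ x, (a x)ᴴ = a x)
    (hb : ∀ x, (b x)ᴴ = b x)
    (hainv : ∀ x, IsUnit (a x).det)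
    (hap : ∀ x, p < x → a x = 1)
    (f : ℂ → ℕ → Matrix (Fin d) (Fin d) ℂ)
    (hf : ∀ k : ℂ, k ≠ 0 → ∀ x : ℕ, 1 ≤ x →
      a (x - 1) * f k (x - 1) + a x * f k (x + 1) + b x * f k x = (k + 1 / k) • f k x)
    (hfp : ∀ k : ℂ, k ≠ 0 → ∀ x : ℕ, p < x → f k x = k ^ x • (1 : Matrix (Fin d) (Fin d) ℂ))
    (k : ℂ) (hk0 : k ≠ 0) (hk1 : k ≠ 1) (hk2 : k ≠ -1) :
    f k 0 * (f (1 / starRingEnd ℂ k) 0)ᴴ = f (1 / k) 0 * (f (starRingEnd ℂ k) 0)ᴴ := by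
  have hkc0 : (starRingEnd ℂ) k ≠ 0 := by
    intro h
    apply hk0
    have h2 := congrArg (starRingEnd ℂ) h
    rwa [Complex.conj_conj, map_zero] at h2
  have hinvk0 : (1:ℂ)/k ≠ 0 := one_div_ne_zero hk0
  have hinvkc0 : (1:ℂ)/(starRingEnd ℂ k) ≠ 0 := one_div_ne_zero hkc0
  have hβ : k - 1/k ≠ 0 := by
    intro hcontra
    have hk' : k = 1/k := sub_eq_zero.mp hcontra
    have : k * k = 1 := by
      nth_rewrite 2 [hk']
      exact mul_one_div_cancel hk0
    rcases mul_self_eq_one_iff.mp this with h | h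
    · exact hk1 h
    · exact hk2 h
  -- right solutions, reindexed
  have hfR : ∀ (l : ℂ), l ≠ 0 → ∀ x,
      a x * f l x + a (x+1) * f l (x+2) + b (x+1) * f l (x+1) = (l + 1/l) • f l (x+1) := by
    intro l hl x
    have e := hf l hl (x+1) (Nat.le_add_left 1 x)
    rw [Nat.add_sub_cancel] at e
    exact e
  have hRk := hfR k hk0
  have hRk' : ∀ x, a x * f (1/k) x + a (x+1) * f (1/k) (x+2) + b (x+1) * f (1/k) (x+1)
      = (k + 1/k) • f (1/k) (x+1) := by
    intro x
    have e := hfR (1/k) hinvk0 x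
    rwa [one_div_one_div, add_comm (1/k) k] at e
  -- left solutions
  have hLh : ∀ x, (f (starRingEnd ℂ k) x)ᴴ * a x + (f (starRingEnd ℂ k) (x+2))ᴴ * a (x+1)
      + (f (starRingEnd ℂ k) (x+1))ᴴ * b (x+1) = (k + 1/k) • (f (starRingEnd ℂ k) (x+1))ᴴ := by
    intro x
    have e := congrArg Matrix.conjTranspose (hfR (starRingEnd ℂ k) hkc0 x)
    simp only [conjTranspose_add, conjTranspose_mul, conjTranspose_smul, ha, hb] at e
    have hst : star ((starRingEnd ℂ) k + 1/(starRingEnd ℂ) k) = k + 1/k := by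
      simp only [← starRingEnd_apply, map_add, map_div₀, _root_.map_one, Complex.conj_conj,
        one_div_one_div]
    rwa [hst] at e
  have hLg : ∀ x, (f (1/starRingEnd ℂ k) x)ᴴ * a x + (f (1/starRingEnd ℂ k) (x+2))ᴴ * a (x+1)
      + (f (1/starRingEnd ℂ k) (x+1))ᴴ * b (x+1)
      = (k + 1/k) • (f (1/starRingEnd ℂ k) (x+1))ᴴ := by
    intro x
    have e := congrArg Matrix.conjTranspose (hfR (1/starRingEnd ℂ k) hinvkc0 x)
    simp only [conjTranspose_add, conjTranspose_mul, conjTranspose_smul, ha, hb] at e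
    have hst : star (1/(starRingEnd ℂ) k + 1/(1/(starRingEnd ℂ) k)) = k + 1/k := by
      simp only [← starRingEnd_apply, map_add, map_div₀, _root_.map_one, Complex.conj_conj,
        one_div_one_div]
      ring
    rwa [hst] at e
  -- asymptotic values of the left solutions
  have hhp : ∀ x, p < x → (f (starRingEnd ℂ k) x)ᴴ = k^x • (1 : Matrix (Fin d) (Fin d) ℂ) := by
    intro x hx
    rw [hfp _ hkc0 x hx, conjTranspose_smul, conjTranspose_one, star_pow,
      ← starRingEnd_apply, Complex.conj_conj]
  have hgp : ∀ x, p < x →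
      (f (1/starRingEnd ℂ k) x)ᴴ = (1/k)^x • (1 : Matrix (Fin d) (Fin d) ℂ) := by
    intro x hx
    rw [hfp _ hinvkc0 x hx, conjTranspose_smul, conjTranspose_one, star_pow, star_div₀,
      star_one, ← starRingEnd_apply, Complex.conj_conj]
  -- the regular solution
  set Φ : ℕ → Matrix (Fin d) (Fin d) ℂ := phiA a b (k + 1/k) with hΦ
  have hΦ0 : Φ 0 = 0 := rfl
  have hΦ1 : Φ 1 = 1 := rfl
  have hRΦ : ∀ x, a x * Φ x + a (x+1) * Φ (x+2) + b (x+1) * Φ (x+1) = (k + 1/k) • Φ (x+1) := by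
    intro x
    rw [hΦ]
    simp only [phiA]
    rw [← mul_assoc, Matrix.mul_nonsing_inv _ (hainv (x+1)), one_mul]
    abel
  -- Wronskian identities
  have Wh : (f (starRingEnd ℂ k) (p+1))ᴴ * (a (p+1) * Φ (p+2))
      - (f (starRingEnd ℂ k) (p+2))ᴴ * (a (p+1) * Φ (p+1))
      = (f (starRingEnd ℂ k) 0)ᴴ * (a 0 * Φ 1) - (f (starRingEnd ℂ k) 1)ᴴ * (a 0 * Φ 0) :=
    wronskian_const a b (k+1/k) _ Φ hLh hRΦ (p+1)
  have Wg : (f (1/starRingEnd ℂ k) (p+1))ᴴ * (a (p+1) * Φ (p+2))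
      - (f (1/starRingEnd ℂ k) (p+2))ᴴ * (a (p+1) * Φ (p+1))
      = (f (1/starRingEnd ℂ k) 0)ᴴ * (a 0 * Φ 1) - (f (1/starRingEnd ℂ k) 1)ᴴ * (a 0 * Φ 0) :=
    wronskian_const a b (k+1/k) _ Φ hLg hRΦ (p+1)
  have I : k^(p+1) • Φ (p+2) - k^(p+2) • Φ (p+1) = (f (starRingEnd ℂ k) 0)ᴴ * a 0 := by
    rw [hhp (p+1) (Nat.lt_succ_self p), hhp (p+2) (by omega), hap (p+1) (Nat.lt_succ_self p)]
      at Wh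
    simpa [smul_mul_assoc, hΦ0, hΦ1] using Wh
  have II : (1/k)^(p+1) • Φ (p+2) - (1/k)^(p+2) • Φ (p+1)
      = (f (1/starRingEnd ℂ k) 0)ᴴ * a 0 := by
    rw [hgp (p+1) (Nat.lt_succ_self p), hgp (p+2) (by omega), hap (p+1) (Nat.lt_succ_self p)]
      at Wg
    simpa [smul_mul_assoc, hΦ0, hΦ1] using Wg
  -- scalar facts
  have hkk : k * (1/k) = 1 := mul_one_div_cancel hk0
  have hkk' : (1/k) * k = 1 := one_div_mul_cancel hk0
  have s1 : k^(p+1) * (1/k)^(p+1) = 1 := by rw [← mul_pow, hkk, one_pow]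
  have s2 : k^(p+1) * (1/k)^(p+2) = 1/k := by rw [pow_succ (1/k) (p+1), ← mul_assoc, s1, one_mul]
  have s4 : (1/k)^(p+1) * k^(p+1) = 1 := by rw [← mul_pow, hkk', one_pow]
  have s3 : (1/k)^(p+1) * k^(p+2) = k := by rw [pow_succ k (p+1), ← mul_assoc, s4, one_mul]
  have t1 : k^(p+2) * (1/k)^(p+1) = k := by rw [pow_succ k (p+1), mul_right_comm, s1, one_mul]
  have t2 : k^(p+2) * (1/k)^(p+2) = 1 := by rw [← mul_pow, hkk, one_pow]
  have t3 : (1/k)^(p+2) * k^(p+1) = 1/k := by rw [pow_succ (1/k) (p+1), mul_right_comm, s4, one_mul]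
  have t4 : (1/k)^(p+2) * k^(p+2) = 1 := by rw [← mul_pow, hkk', one_pow]
  -- the combination
  set C : Matrix (Fin d) (Fin d) ℂ :=
    (k - 1/k)⁻¹ • ((f (1/starRingEnd ℂ k) 0)ᴴ * a 0) with hCdef
  set D : Matrix (Fin d) (Fin d) ℂ :=
    (k - 1/k)⁻¹ • ((f (starRingEnd ℂ k) 0)ᴴ * a 0) with hDdef
  have hC : (k - 1/k) • C = (f (1/starRingEnd ℂ k) 0)ᴴ * a 0 := by
    rw [hCdef, smul_smul, mul_inv_cancel₀ hβ, one_smul]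
  have hD : (k - 1/k) • D = (f (starRingEnd ℂ k) 0)ᴴ * a 0 := by
    rw [hDdef, smul_smul, mul_inv_cancel₀ hβ, one_smul]
  have hRu : ∀ x, a x * (f k x * C - f (1/k) x * D)
      + a (x+1) * (f k (x+2) * C - f (1/k) (x+2) * D)
      + b (x+1) * (f k (x+1) * C - f (1/k) (x+1) * D)
      = (k + 1/k) • (f k (x+1) * C - f (1/k) (x+1) * D) := by
    intro x
    have e : a x * (f k x * C - f (1/k) x * D)
        + a (x+1) * (f k (x+2) * C - f (1/k) (x+2) * D)
        + b (x+1) * (f k (x+1) * C - f (1/k) (x+1) * D)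
        = (a x * f k x + a (x+1) * f k (x+2) + b (x+1) * f k (x+1)) * C
          - (a x * f (1/k) x + a (x+1) * f (1/k) (x+2) + b (x+1) * f (1/k) (x+1)) * D := by
      simp only [mul_sub, add_mul, ← mul_assoc]
      abel
    rw [e, hRk x, hRk' x, smul_mul_assoc, smul_mul_assoc, ← smul_sub]
  have hu1 : f k (p+1) * C - f (1/k) (p+1) * D = Φ (p+1) := by
    apply smul_right_injective (Matrix (Fin d) (Fin d) ℂ) hβ
    show (k - 1/k) • (f k (p+1) * C - f (1/k) (p+1) * D) = (k - 1/k) • Φ (p+1)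
    rw [hfp k hk0 (p+1) (Nat.lt_succ_self p), hfp (1/k) hinvk0 (p+1) (Nat.lt_succ_self p),
      smul_mul_assoc, smul_mul_assoc, one_mul, one_mul, smul_sub,
      smul_comm (k - 1/k) (k^(p+1)) C, smul_comm (k - 1/k) ((1/k)^(p+1)) D, hC, hD,
      ← II, ← I]
    simp only [smul_sub, smul_smul, s1, s2, s3, s4, one_smul, sub_smul]
    abel
  have hu2 : f k (p+2) * C - f (1/k) (p+2) * D = Φ (p+2) := by
    apply smul_right_injective (Matrix (Fin d) (Fin d) ℂ) hβ
    show (k - 1/k) • (f k (p+2) * C - f (1/k) (p+2) * D) = (k - 1/k) • Φ (p+2)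
    rw [hfp k hk0 (p+2) (by omega), hfp (1/k) hinvk0 (p+2) (by omega),
      smul_mul_assoc, smul_mul_assoc, one_mul, one_mul, smul_sub,
      smul_comm (k - 1/k) (k^(p+2)) C, smul_comm (k - 1/k) ((1/k)^(p+2)) D, hC, hD,
      ← II, ← I]
    simp only [smul_sub, smul_smul, t1, t2, t3, t4, one_smul, sub_smul]
    abel
  have h00 : f k 0 * C - f (1/k) 0 * D = 0 := by
    have e := backward_unique a b (k+1/k) hainv
      (fun x => f k x * C - f (1/k) x * D) Φ hRu hRΦ p hu1 hu2
    simpa [hΦ0] using e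
  have h01 : f k 0 * C = f (1/k) 0 * D := sub_eq_zero.mp h00
  have h02 : (k - 1/k)⁻¹ • (f k 0 * ((f (1/starRingEnd ℂ k) 0)ᴴ * a 0))
      = (k - 1/k)⁻¹ • (f (1/k) 0 * ((f (starRingEnd ℂ k) 0)ᴴ * a 0)) := by
    rw [hCdef, hDdef] at h01
    simpa [mul_smul_comm] using h01
  have h03 := smul_right_injective (Matrix (Fin d) (Fin d) ℂ) (inv_ne_zero hβ) h02
  have h04 := congrArg (· * (a 0)⁻¹) h03
  simpa [mul_assoc, Matrix.mul_nonsing_inv _ (hainv 0)] using h04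

/- Under the self-adjoint finitely supported setting, the Jost matrix
ψ(k) = f₀(k) satisfies ψ(k)ψ(1/k̄)ᴴ = ψ(1/k)ψ(k̄)ᴴ for all k ≠ 0; consequently
the S-matrix S(k) = ψ(k)⁻¹ψ(1/k) satisfies S(k̄) = S(k)ᴴ = S(k)⁻¹ on |k| = 1. -/
theorem stmt_12 {d : ℕ} (p : ℕ) (a b : ℕ → Matrix (Fin d) (Fin d) ℂ)
    (ha : ∀ x, (a x)ᴴ = a x)
    (hb : ∀ x, (b x)ᴴ = b x)
    (hainv : ∀ x, IsUnit (a x).det)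
    (hap : ∀ x, p < x → a x = 1)
    (hbp : ∀ x, p < x → b x = 0)
    (f : ℂ → ℕ → Matrix (Fin d) (Fin d) ℂ)
    (hf : ∀ k : ℂ, k ≠ 0 → ∀ x : ℕ, 1 ≤ x →
      a (x - 1) * f k (x - 1) + a x * f k (x + 1) + b x * f k x = (k + 1 / k) • f k x)
    (hfp : ∀ k : ℂ, k ≠ 0 → ∀ x : ℕ, p < x → f k x = k ^ x • (1 : Matrix (Fin d) (Fin d) ℂ)) :
    (∀ k : ℂ, k ≠ 0 →
      f k 0 * (f (1 / starRingEnd ℂ k) 0)ᴴ = f (1 / k) 0 * (f (starRingEnd ℂ k) 0)ᴴ) ∧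
    (∀ k : ℂ, ‖k‖ = 1 → IsUnit (f k 0).det →
      (f (starRingEnd ℂ k) 0)⁻¹ * f (1 / starRingEnd ℂ k) 0
          = ((f k 0)⁻¹ * f (1 / k) 0)ᴴ ∧
      ((f k 0)⁻¹ * f (1 / k) 0)ᴴ = ((f k 0)⁻¹ * f (1 / k) 0)⁻¹) := by
  have hpart1 : ∀ k : ℂ, k ≠ 0 →
      f k 0 * (f (1 / starRingEnd ℂ k) 0)ᴴ = f (1 / k) 0 * (f (starRingEnd ℂ k) 0)ᴴ := by
    intro k hk
    by_cases h1 : k = 1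
    · subst h1; norm_num
    by_cases h2 : k = -1
    · subst h2
      rw [show starRingEnd ℂ (-1 : ℂ) = -1 by simp, show (1:ℂ)/(-1) = -1 by norm_num]
    · exact sym_aux p a b ha hb hainv hap f hf hfp k hk h1 h2
  refine ⟨hpart1, ?_⟩
  intro k habs hdet
  have hk0 : k ≠ 0 := by
    intro h; rw [h] at habs; simp at habs
  have hmul : k * starRingEnd ℂ k = 1 := by
    rw [Complex.mul_conj, ← Complex.sq_norm, habs]; norm_num
  have hconj : starRingEnd ℂ k = 1/k := by
    rw [eq_div_iff hk0]; linear_combination hmul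
  have E : f k 0 * (f k 0)ᴴ = f (1/k) 0 * (f (1/k) 0)ᴴ := by
    have e := hpart1 k hk0
    rwa [hconj, one_div_one_div] at e
  have hdet' : IsUnit (f (1/k) 0).det := by
    have hd := congrArg Matrix.det E
    rw [det_mul, det_mul, det_conjTranspose, det_conjTranspose] at hd
    refine isUnit_iff_ne_zero.mpr ?_
    intro h0
    have hz : (f k 0).det * star (f k 0).det = 0 := by rw [hd, h0, zero_mul]
    exact mul_ne_zero hdet.ne_zero (star_ne_zero.mpr hdet.ne_zero) hz
  have hdetH : IsUnit ((f k 0)ᴴ).det := by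
    rw [det_conjTranspose]; exact hdet.star
  have hkey : (f (1/k) 0)⁻¹ * f k 0 = (f (1/k) 0)ᴴ * ((f k 0)ᴴ)⁻¹ := by
    calc (f (1/k) 0)⁻¹ * f k 0
        = (f (1/k) 0)⁻¹ * (f k 0 * ((f k 0)ᴴ * ((f k 0)ᴴ)⁻¹)) := by
          rw [Matrix.mul_nonsing_inv _ hdetH, mul_one]
      _ = (f (1/k) 0)⁻¹ * (f k 0 * (f k 0)ᴴ * ((f k 0)ᴴ)⁻¹) := by rw [mul_assoc]
      _ = (f (1/k) 0)⁻¹ * (f (1/k) 0 * (f (1/k) 0)ᴴ * ((f k 0)ᴴ)⁻¹) := by rw [E]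
      _ = (f (1/k) 0)ᴴ * ((f k 0)ᴴ)⁻¹ := by
          simp only [← mul_assoc]
          rw [Matrix.nonsing_inv_mul _ hdet', one_mul]
  constructor
  · rw [hconj, one_div_one_div, conjTranspose_mul, Matrix.conjTranspose_nonsing_inv]
    exact hkey
  · rw [conjTranspose_mul, Matrix.conjTranspose_nonsing_inv, Matrix.mul_inv_rev,
      Matrix.nonsing_inv_nonsing_inv _ hdet]
    exact hkey.symm
end

section
/- Let f₁, f₂ be functions with log f_j in the Hardy space H²(D) on the unit disc, satisfying f_j(k) = 1 + o(1) as k → 0, with arguments φ_j(t) = arg f_j(t) continuous on the unit circle minus one point, and e^{−2iφ₁(t)} = e^{−2iφ₂(t)} for a.e. t on the circle. Then f₁ = f₂ on the unit disc. -/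
open Complex Metric MeasureTheory
open Filter

lemma aux_ae_closure {a b : ℝ} {P : ℝ → Prop}
    (hP : ∀ᵐ θ ∂(volume.restrict (Set.Ioo a b)), P θ) :
    ∀ θ ∈ Set.Ioo a b, θ ∈ closure {x | x ∈ Set.Ioo a b ∧ P x} := by
  intro θ hθ
  by_contra hcl
  rw [Metric.mem_closure_iff] at hcl
  push_neg at hcl
  obtain ⟨ε, hε, hball⟩ := hcl
  obtain ⟨ε', hε', hsub⟩ := Metric.isOpen_iff.1 isOpen_Ioo θ hθ
  have hnull : volume ({x | ¬ P x} ∩ Set.Ioo a b) = 0 := by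
    have := (ae_iff.1 hP)
    rwa [Measure.restrict_apply' measurableSet_Ioo] at this
  have hsub2 : Metric.ball θ (min ε ε') ⊆ {x | ¬ P x} ∩ Set.Ioo a b := by
    intro x hx
    have hxI : x ∈ Set.Ioo a b := hsub (Metric.ball_subset_ball (min_le_right _ _) hx)
    refine ⟨fun hPx => ?_, hxI⟩
    have := hball x ⟨hxI, hPx⟩
    rw [Metric.mem_ball, dist_comm] at hx
    exact absurd (lt_of_lt_of_le hx (min_le_left _ _)) (not_lt.2 this)
  have : volume (Metric.ball θ (min ε ε')) = 0 :=
    measure_mono_null hsub2 hnull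
  rw [Real.volume_ball] at this
  simp only [ENNReal.ofReal_eq_zero] at this
  nlinarith [lt_min hε hε']

lemma aux_psi_const {a b : ℝ} (ψ : ℝ → ℝ) (hc : ContinuousOn ψ (Set.Ioo a b))
    (hval : ∀ θ ∈ Set.Ioo a b, ∃ m : ℤ, ψ θ = Real.pi * m) :
    ∀ x ∈ Set.Ioo a b, ∀ y ∈ Set.Ioo a b, ψ x = ψ y := by
  have key : ∀ x ∈ Set.Ioo a b, ∀ y ∈ Set.Ioo a b, ¬ (ψ x < ψ y) := by
    intro x hx y hy hlt
    obtain ⟨p, hp⟩ := hval x hx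
    obtain ⟨q, hq⟩ := hval y hy
    have hsubI : Set.uIcc x y ⊆ Set.Ioo a b :=
      (Set.ordConnected_Ioo).uIcc_subset hx hy
    have hmid : ψ x + Real.pi / 2 ∈ Set.uIcc (ψ x) (ψ y) := by
      rw [Set.uIcc_of_le hlt.le]
      constructor
      · linarith [Real.pi_pos]
      · -- ψ x + π ≤ ψ y since both are multiples of π and ψ x < ψ y
        have hpq : p < q := by
          by_contra hpq
          push_neg at hpq
          have : Real.pi * q ≤ Real.pi * p :=
            mul_le_mul_of_nonneg_left (by exact_mod_cast hpq) Real.pi_pos.le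
          rw [← hp, ← hq] at this; linarith
        have : Real.pi * (p + 1) ≤ Real.pi * q := by
          have : (p : ℝ) + 1 ≤ q := by exact_mod_cast hpq
          nlinarith [Real.pi_pos]
        rw [hp, hq]
        nlinarith [Real.pi_pos]
    obtain ⟨τ, hτ, hτval⟩ := intermediate_value_uIcc (hc.mono hsubI) hmid
    obtain ⟨r, hr⟩ := hval τ (hsubI hτ)
    rw [hr, hp] at hτval
    have h2 : Real.pi * (2 * r) = Real.pi * (2 * p + 1) := by ring_nf; ring_nf at hτval; linarith
    have : (2 * r : ℝ) = (2 * p + 1 : ℝ) := by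
      have := mul_left_cancel₀ Real.pi_ne_zero h2
      exact_mod_cast this
    have : (2 * r : ℤ) = 2 * p + 1 := by exact_mod_cast this
    omega
  intro x hx y hy
  rcases lt_trichotomy (ψ x) (ψ y) with h | h | h
  · exact absurd h (key x hx y hy)
  · exact h
  · exact absurd h (key y hy x hx)

lemma aux_vitali {a b : ℝ} (hab : a < b) (u : ℕ → ℝ → ℝ) (hu : ∀ k, Continuous (u k))
    (c B : ℝ) (hB : ∀ k, (∫ θ in Set.Ioo a b, (u k θ) ^ 2) ≤ B)
    (hae : ∀ᵐ θ ∂(volume.restrict (Set.Ioo a b)),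
      Tendsto (fun k => u k θ) atTop (nhds c)) :
    Tendsto (fun k => ∫ θ in Set.Ioo a b, |u k θ - c|) atTop (nhds 0) := by
  set μ := volume.restrict (Set.Ioo a b) with hμ
  have hμuniv : μ Set.univ = ENNReal.ofReal (b - a) := by
    rw [hμ, Measure.restrict_apply_univ, Real.volume_Ioo]
  haveI : IsFiniteMeasure μ := ⟨by rw [hμuniv]; exact ENNReal.ofReal_lt_top⟩
  have hint : ∀ f : ℝ → ℝ, Continuous f → Integrable f μ := by
    intro f hf
    exact (hf.integrableOn_Icc).mono_set Set.Ioo_subset_Icc_self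
  set B₂ := 2 * B + 2 * c ^ 2 * (b - a) with hB₂def
  have hB2 : ∀ k, (∫ θ, |u k θ - c| ^ 2 ∂μ) ≤ B₂ := by
    intro k
    have h1 : (∫ θ, |u k θ - c| ^ 2 ∂μ) ≤ ∫ θ, (2 * (u k θ) ^ 2 + 2 * c ^ 2) ∂μ := by
      refine integral_mono (hint _ (by fun_prop)) (hint _ (by fun_prop)) ?_
      intro θ
      show |u k θ - c| ^ 2 ≤ 2 * u k θ ^ 2 + 2 * c ^ 2
      rw [_root_.sq_abs]
      nlinarith [sq_nonneg (u k θ + c)]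
    have h2 : (∫ θ, (2 * (u k θ) ^ 2 + 2 * c ^ 2) ∂μ)
        = 2 * (∫ θ, (u k θ) ^ 2 ∂μ) + 2 * c ^ 2 * (b - a) := by
      rw [integral_add ((hint _ (by fun_prop)).const_mul 2) (integrable_const _),
        integral_const, integral_const_mul, measureReal_def, hμuniv, smul_eq_mul,
        ENNReal.toReal_ofReal (by linarith)]
      ring
    calc (∫ θ, |u k θ - c| ^ 2 ∂μ) ≤ _ := h1
      _ = _ := h2
      _ ≤ B₂ := by rw [hB₂def]; have := hB k; nlinarith
  have hB2nonneg : 0 ≤ B₂ :=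
    le_trans (integral_nonneg (fun θ => sq_nonneg _)) (hB2 0)
  rw [Metric.tendsto_atTop]
  intro ε hε
  set lam := ε / (4 * (B₂ + 1)) with hlam
  have hlampos : 0 < lam := by positivity
  have hli : lam * lam⁻¹ = 1 := mul_inv_cancel₀ hlampos.ne'
  set δ := lam * ε / 2 with hδdef
  have hδpos : 0 < δ := by positivity
  obtain ⟨t, htm, htμ, hunif⟩ := tendstoUniformlyOn_of_ae_tendsto' (μ := μ)
    (fun k => (hu k).stronglyMeasurable) stronglyMeasurable_const hae hδpos
  rw [Metric.tendstoUniformlyOn_iff] at hunif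
  have hba : (0:ℝ) < b - a := by linarith
  have hε' : 0 < ε / (4 * (b - a)) := div_pos hε (by linarith)
  obtain ⟨N, hN⟩ := eventually_atTop.1 (hunif _ hε')
  refine ⟨N, fun k hk => ?_⟩
  have hvk : Integrable (fun θ => |u k θ - c|) μ := hint _ (by fun_prop)
  have hsplit : (∫ θ, |u k θ - c| ∂μ)
      = (∫ θ in t, |u k θ - c| ∂μ) + (∫ θ in tᶜ, |u k θ - c| ∂μ) :=
    (integral_add_compl htm hvk).symm
  have hμt : (μ t).toReal ≤ δ :=
    ENNReal.toReal_le_of_le_ofReal hδpos.le htμ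
  have boundA : (∫ θ in t, |u k θ - c| ∂μ) ≤ lam / 2 * B₂ + lam⁻¹ / 2 * δ := by
    have hpt : ∀ θ, |u k θ - c| ≤ lam / 2 * |u k θ - c| ^ 2 + lam⁻¹ / 2 := by
      intro θ
      have hexp : lam * (|u k θ - c| - lam⁻¹) ^ 2
          = lam * |u k θ - c| ^ 2 - 2 * |u k θ - c| * (lam * lam⁻¹)
            + lam⁻¹ * (lam * lam⁻¹) := by ring
      have h0 := mul_nonneg hlampos.le (sq_nonneg (|u k θ - c| - lam⁻¹))
      rw [hexp, hli] at h0
      linarith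
    have h1 : (∫ θ in t, |u k θ - c| ∂μ)
        ≤ ∫ θ in t, (lam / 2 * |u k θ - c| ^ 2 + lam⁻¹ / 2) ∂μ :=
      integral_mono hvk.integrableOn (hint _ (by fun_prop)).integrableOn hpt
    have h2 : (∫ θ in t, (lam / 2 * |u k θ - c| ^ 2 + lam⁻¹ / 2) ∂μ)
        = lam / 2 * (∫ θ in t, |u k θ - c| ^ 2 ∂μ) + lam⁻¹ / 2 * (μ t).toReal := by
      rw [integral_add ((hint _ (by fun_prop)).integrableOn.const_mul _)
        (integrable_const _), integral_const, integral_const_mul,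
        measureReal_restrict_apply_univ, measureReal_def, smul_eq_mul]
      ring
    have h3 : (∫ θ in t, |u k θ - c| ^ 2 ∂μ) ≤ B₂ :=
      le_trans (setIntegral_le_integral (hint _ (by fun_prop))
        (Filter.Eventually.of_forall fun θ => sq_nonneg _)) (hB2 k)
    calc (∫ θ in t, |u k θ - c| ∂μ) ≤ _ := h1
      _ = _ := h2
      _ ≤ lam / 2 * B₂ + lam⁻¹ / 2 * δ :=
          add_le_add (mul_le_mul_of_nonneg_left h3 (by positivity))
            (mul_le_mul_of_nonneg_left hμt (by positivity))
  have boundB : (∫ θ in tᶜ, |u k θ - c| ∂μ) ≤ ε / (4 * (b - a)) * (b - a) := by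
    have hptw : ∀ θ ∈ tᶜ, |u k θ - c| ≤ ε / (4 * (b - a)) := by
      intro θ hθ
      have := hN k hk θ hθ
      rw [Real.dist_eq] at this
      calc |u k θ - c| = |c - u k θ| := abs_sub_comm _ _
        _ ≤ _ := this.le
    calc (∫ θ in tᶜ, |u k θ - c| ∂μ)
        ≤ ∫ _ in tᶜ, (ε / (4 * (b - a))) ∂μ := by
          refine setIntegral_mono_on hvk.integrableOn (integrable_const _) htm.compl hptw
      _ = ε / (4 * (b - a)) * (μ tᶜ).toReal := by
          rw [integral_const, smul_eq_mul, measureReal_restrict_apply_univ, measureReal_def, mul_comm]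
      _ ≤ ε / (4 * (b - a)) * (b - a) := by
          gcongr
          have h1 : μ tᶜ ≤ μ Set.univ := measure_mono (Set.subset_univ _)
          have := ENNReal.toReal_mono (by rw [hμuniv]; exact ENNReal.ofReal_ne_top) h1
          rwa [hμuniv, ENNReal.toReal_ofReal hba.le] at this
  have hnonneg : 0 ≤ ∫ θ, |u k θ - c| ∂μ := integral_nonneg fun θ => abs_nonneg _
  rw [Real.dist_eq, sub_zero, _root_.abs_of_nonneg hnonneg]
  have e1 : lam / 2 * B₂ ≤ ε / 8 := by
    have hkey : lam * (4 * (B₂ + 1)) = ε := div_mul_cancel₀ _ (by positivity)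
    nlinarith [mul_nonneg hlampos.le hB2nonneg, hlampos.le]
  have e2 : lam⁻¹ / 2 * δ = ε / 4 := by
    rw [hδdef]
    field_simp
    ring
  have e3 : ε / (4 * (b - a)) * (b - a) = ε / 4 := by field_simp
  calc (∫ θ, |u k θ - c| ∂μ) = _ := hsplit
    _ ≤ (lam / 2 * B₂ + lam⁻¹ / 2 * δ) + ε / (4 * (b - a)) * (b - a) := by
        exact add_le_add boundA boundB
    _ ≤ ε / 8 + ε / 4 + ε / 4 := by rw [e2, e3]; linarith
    _ < ε := by linarith

lemma aux_Q_eq {h : ℂ → ℂ} (hd : DifferentiableOn ℂ h (ball (0:ℂ) 1)) (n : ℕ)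
    {r R : ℝ} (hr : 0 < r) (hrR : r ≤ R) (hR : R < 1) :
    (∮ z in C((0:ℂ), R), z⁻¹ ^ n • (z⁻¹ • h z))
      = ∮ z in C((0:ℂ), r), z⁻¹ ^ n • (z⁻¹ • h z) := by
  refine Complex.circleIntegral_eq_of_differentiable_on_annulus_off_countable hr hrR
    Set.countable_empty ?_ ?_
  · have hset : closedBall (0:ℂ) R \ ball (0:ℂ) r ⊆ {w : ℂ | w ≠ 0} ∩ ball (0:ℂ) 1 := by
      intro x hx
      obtain ⟨hx1, hx2⟩ := hx
      simp only [mem_closedBall, dist_zero_right] at hx1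
      simp only [mem_ball, dist_zero_right, not_lt] at hx2
      refine ⟨fun h0 => ?_, ?_⟩
      · rw [h0] at hx2; simp only [norm_zero] at hx2; linarith
      · simp only [mem_ball, dist_zero_right]; linarith
    have h1 : ContinuousOn (fun z : ℂ => z⁻¹) ({w : ℂ | w ≠ 0} ∩ ball (0:ℂ) 1) :=
      continuousOn_id.inv₀ (fun x hx => hx.1)
    exact ((h1.pow n).smul (h1.smul (hd.continuousOn.mono Set.inter_subset_right))).mono hset
  · intro z hz
    have hz0 : z ≠ 0 := by
      intro h0
      have := hz.1.2
      simp [h0, hr.le] at this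
    have hzb : z ∈ ball (0:ℂ) 1 := by
      have := hz.1.1
      simp only [mem_ball, dist_zero_right] at this ⊢
      linarith
    have hdz : DifferentiableAt ℂ h z := hd.differentiableAt (isOpen_ball.mem_nhds hzb)
    exact (((differentiableAt_id.inv hz0).pow n)).smul ((differentiableAt_id.inv hz0).smul hdz)

lemma aux_cauchy_zero {h : ℂ → ℂ} (hd : DifferentiableOn ℂ h (ball (0:ℂ) 1)) (m : ℕ)
    {r : ℝ} (hr : 0 ≤ r) (hr1 : r < 1) :
    (∮ z in C((0:ℂ), r), z ^ m • h z) = 0 := by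
  refine Complex.circleIntegral_eq_zero_of_differentiable_on_off_countable hr
    Set.countable_empty ?_ ?_
  · refine (continuousOn_pow m ).smul ((hd.continuousOn).mono (fun x hx => ?_))
    simp only [mem_closedBall, dist_zero_right] at hx
    simp only [mem_ball, dist_zero_right]
    linarith
  · intro z hz
    have hzb : z ∈ ball (0:ℂ) 1 := by
      have := hz.1
      simp only [mem_ball, dist_zero_right] at this ⊢
      linarith
    exact (differentiableAt_pow m).smul (hd.differentiableAt (isOpen_ball.mem_nhds hzb))

lemma aux_const {h : ℂ → ℂ} (hd : DifferentiableOn ℂ h (ball (0:ℂ) 1))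
    (hQ : ∀ n : ℕ, 1 ≤ n → (∮ z in C((0:ℂ), (1/2:ℝ)), z⁻¹ ^ n • (z⁻¹ • h z)) = 0) :
    ∀ z ∈ ball (0:ℂ) 1, h z = h 0 := by
  intro z hz
  simp only [mem_ball, dist_zero_right] at hz
  set R : ℝ := (‖z‖ + 1) / 2 with hRdef
  have habs : ‖z‖ = ‖z‖ := rfl
  have hR0 : (0:ℝ) < R := by positivity
  have hRhalf : (1/2 : ℝ) ≤ R := by
    rw [hRdef]
    have : 0 ≤ ‖z‖ := norm_nonneg z
    linarith
  have hR1 : R < 1 := by rw [hRdef, habs]; linarith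
  have hzR : ‖z‖ < R := by rw [hRdef, habs]; linarith
  set R' : NNReal := ⟨R, hR0.le⟩ with hR'def
  have hdc : DifferentiableOn ℂ h (closedBall (0:ℂ) R') := by
    refine hd.mono (fun x hx => ?_)
    simp only [mem_closedBall, dist_zero_right] at hx
    simp only [mem_ball, dist_zero_right]
    exact lt_of_le_of_lt hx hR1
  have hps := hdc.hasFPowerSeriesOnBall (by exact_mod_cast hR0)
  have hQR : ∀ n : ℕ, 1 ≤ n → (∮ w in C((0:ℂ), R), w⁻¹ ^ n • (w⁻¹ • h w)) = 0 := by
    intro n hn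
    rw [aux_Q_eq hd n (by norm_num) hRhalf hR1]
    exact hQ n hn
  have key : ∀ y : ℂ, ‖y‖ < R → h y = (cauchyPowerSeries h 0 R' 0 fun _ => (0:ℂ)) := by
    intro y hy
    have hmem : y ∈ Metric.eball (0:ℂ) R' := by
      rw [Metric.mem_eball, edist_zero_right]
      exact_mod_cast hy
    have hsum := hps.hasSum hmem
    have hzero : ∀ n : ℕ, n ≠ 0 → (cauchyPowerSeries h 0 R' n fun _ => y) = 0 := by
      intro n hn
      rw [cauchyPowerSeries_apply]
      have htrans : ∀ w : ℂ, (y / (w - 0)) ^ n • ((w - 0)⁻¹ • h w)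
          = y ^ n • (w⁻¹ ^ n • (w⁻¹ • h w)) := by
        intro w
        simp only [sub_zero, smul_eq_mul, div_pow, div_eq_mul_inv, mul_pow]
        ring
      rw [show (∮ w in C((0:ℂ), (R':ℝ)), (y / (w - 0)) ^ n • ((w - 0)⁻¹ • h w))
            = ∮ w in C((0:ℂ), (R':ℝ)), y ^ n • (w⁻¹ ^ n • (w⁻¹ • h w)) from
          circleIntegral.integral_congr hR0.le (fun w _ => htrans w)]
      rw [circleIntegral.integral_smul]
      rw [show ((R' : ℝ)) = R from rfl, hQR n (Nat.one_le_iff_ne_zero.2 hn)]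
      simp
    have huniq := (hasSum_single (f := fun n => cauchyPowerSeries h 0 R' n fun _ => y) 0
      (fun n hn => hzero n hn)).unique hsum
    rw [zero_add] at huniq
    rw [← huniq]
    congr 1
    exact funext fun i => absurd i.2 (by simp)
  rw [key z hzR, key 0 (by simpa using hR0)]

lemma aux_W {h : ℂ → ℂ} (hd : DifferentiableOn ℂ h (ball (0:ℂ) 1)) {ρ : ℝ}
    (hρh : 1/2 ≤ ρ) (hρ1 : ρ < 1) (m : ℕ) :
    (∫ θ in (0:ℝ)..(2*Real.pi),
        (((h ((ρ:ℂ) * Complex.exp ((θ:ℂ) * I))).im : ℂ) * Complex.exp (((m:ℂ)+1) * θ * I)))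
    = -(1/2) * (ρ:ℂ)^(m+1) *
        (starRingEnd ℂ) (∮ z in C((0:ℂ), (1/2:ℝ)), z⁻¹ ^ (m+1) • (z⁻¹ • h z)) := by
  have hρ0 : (0:ℝ) < ρ := lt_of_lt_of_le (by norm_num) hρh
  have hρc : (ρ:ℂ) ≠ 0 := by exact_mod_cast hρ0.ne'
  set E : ℝ → ℂ := fun θ => Complex.exp ((θ:ℂ) * I) with hEdef
  have hEne : ∀ θ, E θ ≠ 0 := fun θ => Complex.exp_ne_zero _
  have hcirc : ∀ θ : ℝ, (ρ:ℂ) * E θ ∈ ball (0:ℂ) 1 := by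
    intro θ
    simp only [mem_ball, dist_zero_right, norm_mul, hEdef,
      Complex.norm_exp_ofReal_mul_I, Complex.norm_real, Real.norm_eq_abs, mul_one, abs_of_pos hρ0]
    exact hρ1
  set F : ℝ → ℂ := fun θ => h ((ρ:ℂ) * E θ) with hFdef
  have hFcont : Continuous F := by
    refine hd.continuousOn.comp_continuous (by fun_prop) hcirc
  have hexpcont : ∀ c : ℂ, Continuous fun θ : ℝ => Complex.exp (c * θ * I) := by
    intro c; fun_prop
  -- the E-power identities
  have hpow : ∀ θ : ℝ, Complex.exp (((m:ℂ)+1) * θ * I) = (E θ)^(m+1) := by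
    intro θ
    rw [hEdef, ← Complex.exp_nat_mul]
    push_cast
    ring_nf
  have hpowneg : ∀ θ : ℝ, Complex.exp (-((m:ℂ)+1) * θ * I) = ((E θ)⁻¹)^(m+1) := by
    intro θ
    rw [hEdef, ← Complex.exp_neg, ← Complex.exp_nat_mul]
    push_cast
    ring_nf
  -- Step 1 : ∫ e^{i n θ} F = 0
  have step1 : (∫ θ in (0:ℝ)..(2*Real.pi), Complex.exp (((m:ℂ)+1) * θ * I) * F θ) = 0 := by
    have h1 : (∮ z in C((0:ℂ), ρ), z ^ m • h z)
        = ∫ θ in (0:ℝ)..(2*Real.pi),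
            (I * (ρ:ℂ)^(m+1)) * (Complex.exp (((m:ℂ)+1) * θ * I) * F θ) := by
      rw [circleIntegral]
      refine intervalIntegral.integral_congr fun θ _ => ?_
      rw [deriv_circleMap]
      simp only [circleMap, zero_add, smul_eq_mul, hFdef]
      rw [hpow θ]
      ring
    rw [aux_cauchy_zero hd m hρ0.le hρ1, intervalIntegral.integral_const_mul] at h1
    have hne : (I * (ρ:ℂ)^(m+1)) ≠ 0 := by
      simp [Complex.I_ne_zero, hρc]
    exact (mul_eq_zero.1 h1.symm).resolve_left hne
  -- Step 2 : (I * ρ⁻¹^{m+1}) * ∫ e^{-i n θ} F = Q(1/2)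
  set Q : ℂ := ∮ z in C((0:ℂ), (1/2:ℝ)), z⁻¹ ^ (m+1) • (z⁻¹ • h z) with hQdef
  set A : ℂ := ∫ θ in (0:ℝ)..(2*Real.pi), Complex.exp (-((m:ℂ)+1) * θ * I) * F θ with hAdef
  have step2 : (I * ((ρ:ℂ)⁻¹)^(m+1)) * A = Q := by
    have h1 : (∮ z in C((0:ℂ), ρ), z⁻¹ ^ (m+1) • (z⁻¹ • h z))
        = ∫ θ in (0:ℝ)..(2*Real.pi),
            (I * ((ρ:ℂ)⁻¹)^(m+1)) * (Complex.exp (-((m:ℂ)+1) * θ * I) * F θ) := by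
      rw [circleIntegral]
      refine intervalIntegral.integral_congr fun θ _ => ?_
      rw [deriv_circleMap]
      simp only [circleMap, zero_add, smul_eq_mul, hFdef]
      rw [hpowneg θ, mul_inv, mul_pow]
      have c1 : (ρ:ℂ) * (ρ:ℂ)⁻¹ = 1 := mul_inv_cancel₀ hρc
      have c2 : E θ * (E θ)⁻¹ = 1 := mul_inv_cancel₀ (hEne θ)
      calc (↑ρ * E θ * I) * (((ρ:ℂ)⁻¹ ^ (m+1) * (E θ)⁻¹ ^ (m+1)) * (((ρ:ℂ)⁻¹ * (E θ)⁻¹) * h (↑ρ * E θ)))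
          = (((ρ:ℂ) * (ρ:ℂ)⁻¹) * (E θ * (E θ)⁻¹)) * ((I * ((ρ:ℂ)⁻¹)^(m+1)) * ((E θ)⁻¹ ^ (m+1) * h (↑ρ * E θ))) := by ring
        _ = (I * ((ρ:ℂ)⁻¹)^(m+1)) * ((E θ)⁻¹ ^ (m+1) * h (↑ρ * E θ)) := by rw [c1, c2]; ring
    rw [aux_Q_eq hd (m+1) (by norm_num) hρh hρ1, intervalIntegral.integral_const_mul] at h1
    rw [hAdef, hQdef, h1]
  -- Step 3 : ∫ conj F e^{i n θ} = conj A
  have step3 : (∫ θ in (0:ℝ)..(2*Real.pi),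
      (starRingEnd ℂ) (F θ) * Complex.exp (((m:ℂ)+1) * θ * I)) = (starRingEnd ℂ) A := by
    have hcongr : ∀ θ : ℝ,
        (starRingEnd ℂ) (F θ) * Complex.exp (((m:ℂ)+1) * θ * I)
          = (starRingEnd ℂ) (Complex.exp (-((m:ℂ)+1) * θ * I) * F θ) := by
      intro θ
      rw [map_mul, ← Complex.exp_conj]
      have : (starRingEnd ℂ) (-((m:ℂ)+1) * θ * I) = ((m:ℂ)+1) * θ * I := by
        simp [map_mul, Complex.conj_I, Complex.conj_ofReal]
        ring
      rw [this]
      ring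
    rw [intervalIntegral.integral_congr (fun θ _ => hcongr θ)]
    rw [hAdef, intervalIntegral.integral_of_le (by positivity),
      intervalIntegral.integral_of_le (by positivity)]
    exact integral_conj
  -- Step 4 : combine
  have him : ∀ w : ℂ, ((w.im : ℂ)) = (w - (starRingEnd ℂ) w) * (2*I)⁻¹ := by
    intro w
    rw [Complex.sub_conj]
    have : (2*I : ℂ) ≠ 0 := by simp [Complex.I_ne_zero]
    field_simp
    push_cast
    ring
  have hsplit : (∫ θ in (0:ℝ)..(2*Real.pi),
      (((F θ).im : ℂ) * Complex.exp (((m:ℂ)+1) * θ * I)))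
      = (2*I)⁻¹ * ((∫ θ in (0:ℝ)..(2*Real.pi), Complex.exp (((m:ℂ)+1) * θ * I) * F θ)
        - (∫ θ in (0:ℝ)..(2*Real.pi),
            (starRingEnd ℂ) (F θ) * Complex.exp (((m:ℂ)+1) * θ * I))) := by
    rw [← intervalIntegral.integral_sub, ← intervalIntegral.integral_const_mul]
    · refine intervalIntegral.integral_congr fun θ _ => ?_
      rw [him (F θ)]
      ring
    · exact ((hexpcont _).mul hFcont).intervalIntegrable _ _
    · exact ((Complex.continuous_conj.comp hFcont).mul (hexpcont _)).intervalIntegrable _ _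
  rw [hsplit, step1, step3, zero_sub]
  -- now : -(2I)⁻¹ conj A = -(1/2) ρ^{m+1} conj Q
  have hconj2 : (starRingEnd ℂ) (I * ((ρ:ℂ)⁻¹)^(m+1)) * (starRingEnd ℂ) A
      = (starRingEnd ℂ) Q := by rw [← map_mul, step2]
  have hcA : (starRingEnd ℂ) A = I * (ρ:ℂ)^(m+1) * (starRingEnd ℂ) Q := by
    have hc : (starRingEnd ℂ) (I * ((ρ:ℂ)⁻¹)^(m+1)) = -I * ((ρ:ℂ)⁻¹)^(m+1) := by
      rw [map_mul, map_pow, map_inv₀, Complex.conj_I, Complex.conj_ofReal]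
      try ring
    rw [hc] at hconj2
    have hmul : (I * (ρ:ℂ)^(m+1)) * ((-I * ((ρ:ℂ)⁻¹)^(m+1)) * (starRingEnd ℂ) A)
        = (I * (ρ:ℂ)^(m+1)) * (starRingEnd ℂ) Q := by rw [hconj2]
    have hII : (I:ℂ) * I = -1 := Complex.I_mul_I
    have hrr : (ρ:ℂ)^(m+1) * ((ρ:ℂ)⁻¹)^(m+1) = 1 := by
      rw [← mul_pow, mul_inv_cancel₀ hρc, one_pow]
    calc (starRingEnd ℂ) A
        = (I * (ρ:ℂ)^(m+1)) * ((-I * ((ρ:ℂ)⁻¹)^(m+1)) * (starRingEnd ℂ) A) := by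
          rw [show (I * (ρ:ℂ)^(m+1)) * ((-I * ((ρ:ℂ)⁻¹)^(m+1)) * (starRingEnd ℂ) A)
              = (-(I * I)) * ((ρ:ℂ)^(m+1) * ((ρ:ℂ)⁻¹)^(m+1)) * (starRingEnd ℂ) A from by ring,
            hII, hrr]
          ring
        _ = I * (ρ:ℂ)^(m+1) * (starRingEnd ℂ) Q := by rw [hmul]
  rw [hcA, mul_inv, Complex.inv_I]
  linear_combination ((2⁻¹:ℂ) * (ρ:ℂ)^(m+1) * (starRingEnd ℂ) Q) * Complex.I_mul_I

/- Hardy-space uniqueness (Lemma 5.9): if log f₁, log f₂ ∈ H²(𝔻) (expressed by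
analytic logarithms g_j with exp g_j = f_j and uniformly L²-bounded circle
means), f_j(k) = 1 + o(1) as k → 0, the boundary arguments φ_j (radial limits
of Im g_j) are continuous on the circle minus one point, and
e^{−2iφ₁} = e^{−2iφ₂} a.e. on the circle, then f₁ = f₂ on 𝔻. -/
theorem stmt_19 (f₁ f₂ g₁ g₂ : ℂ → ℂ) (φ₁ φ₂ : ℝ → ℝ) (t₀ : ℝ)
    (hg₁ : DifferentiableOn ℂ g₁ (ball (0 : ℂ) 1))
    (hg₂ : DifferentiableOn ℂ g₂ (ball (0 : ℂ) 1))
    (he₁ : ∀ k ∈ ball (0 : ℂ) 1, Complex.exp (g₁ k) = f₁ k)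
    (he₂ : ∀ k ∈ ball (0 : ℂ) 1, Complex.exp (g₂ k) = f₂ k)
    (hH : ∃ M : ℝ, ∀ ρ : ℝ, 0 < ρ → ρ < 1 →
      (∫ θ in (0 : ℝ)..(2 * Real.pi),
          ‖g₁ ((ρ : ℂ) * Complex.exp (Complex.I * (θ : ℂ)))‖ ^ 2) ≤ M ∧
      (∫ θ in (0 : ℝ)..(2 * Real.pi),
          ‖g₂ ((ρ : ℂ) * Complex.exp (Complex.I * (θ : ℂ)))‖ ^ 2) ≤ M)
    (hlim₁ : Filter.Tendsto f₁ (nhdsWithin 0 (ball (0 : ℂ) 1 \ {0})) (nhds 1))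
    (hlim₂ : Filter.Tendsto f₂ (nhdsWithin 0 (ball (0 : ℂ) 1 \ {0})) (nhds 1))
    (hb₁ : ∀ᵐ (θ : ℝ) ∂(volume.restrict (Set.Ioo t₀ (t₀ + 2 * Real.pi))),
      Filter.Tendsto (fun ρ : ℝ => (g₁ ((ρ : ℂ) * Complex.exp (Complex.I * (θ : ℂ)))).im)
        (nhdsWithin 1 (Set.Iio 1)) (nhds (φ₁ θ)))
    (hb₂ : ∀ᵐ (θ : ℝ) ∂(volume.restrict (Set.Ioo t₀ (t₀ + 2 * Real.pi))),
      Filter.Tendsto (fun ρ : ℝ => (g₂ ((ρ : ℂ) * Complex.exp (Complex.I * (θ : ℂ)))).im)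
        (nhdsWithin 1 (Set.Iio 1)) (nhds (φ₂ θ)))
    (hc₁ : ContinuousOn φ₁ (Set.Ioo t₀ (t₀ + 2 * Real.pi)))
    (hc₂ : ContinuousOn φ₂ (Set.Ioo t₀ (t₀ + 2 * Real.pi)))
    (hae : ∀ᵐ (θ : ℝ) ∂(volume.restrict (Set.Ioo t₀ (t₀ + 2 * Real.pi))),
      Complex.exp (-2 * Complex.I * (φ₁ θ : ℂ)) =
        Complex.exp (-2 * Complex.I * (φ₂ θ : ℂ))) :
    Set.EqOn f₁ f₂ (ball (0 : ℂ) 1) := by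
  classical
  obtain ⟨M, hM⟩ := hH
  have hπ : 0 < Real.pi := Real.pi_pos
  have hab : t₀ < t₀ + 2 * Real.pi := by linarith
  set h : ℂ → ℂ := fun z => g₁ z - g₂ z with hhdef
  have hd : DifferentiableOn ℂ h (ball (0:ℂ) 1) := hg₁.sub hg₂
  -- membership of circles in the unit ball
  have hmem : ∀ r : ℝ, 0 ≤ r → r < 1 → ∀ θ : ℝ, (r:ℂ) * Complex.exp (I * θ) ∈ ball (0:ℂ) 1 := by
    intro r hr0 hr1 θ
    simp only [mem_ball, dist_zero_right, norm_mul, Complex.norm_real, Real.norm_eq_abs,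
      mul_comm I (θ:ℂ), Complex.norm_exp_ofReal_mul_I, mul_one, _root_.abs_of_nonneg hr0]
    exact hr1
  -- Step A : ψ = φ₁ - φ₂ is constant on S
  set ψ : ℝ → ℝ := fun θ => φ₁ θ - φ₂ θ with hψdef
  have hψcont : ContinuousOn ψ (Set.Ioo t₀ (t₀ + 2 * Real.pi)) := hc₁.sub hc₂
  have hζcont : ContinuousOn (fun θ : ℝ => Complex.exp (-2 * I * ((ψ θ : ℝ) : ℂ)))
      (Set.Ioo t₀ (t₀ + 2 * Real.pi)) :=
    Complex.continuous_exp.comp_continuousOn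
      (continuousOn_const.mul (Complex.continuous_ofReal.comp_continuousOn hψcont))
  have hζ1 : ∀ θ ∈ Set.Ioo t₀ (t₀ + 2 * Real.pi),
      Complex.exp (-2 * I * ((ψ θ : ℝ) : ℂ)) = 1 := by
    intro θ hθ
    set Aset : Set ℝ := {x | x ∈ Set.Ioo t₀ (t₀ + 2 * Real.pi) ∧
      Complex.exp (-2 * Complex.I * (φ₁ x : ℂ)) = Complex.exp (-2 * Complex.I * (φ₂ x : ℂ))}
      with hAdef
    have hclos : θ ∈ closure Aset := aux_ae_closure hae θ hθ
    have hmemim : Complex.exp (-2 * I * ((ψ θ : ℝ) : ℂ)) ∈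
        closure ((fun x : ℝ => Complex.exp (-2 * I * ((ψ x : ℝ) : ℂ))) '' Aset) := by
      refine ContinuousWithinAt.mem_closure_image ?_ hclos
      exact (hζcont θ hθ).mono (fun x hx => hx.1)
    have himsub : ((fun x : ℝ => Complex.exp (-2 * I * ((ψ x : ℝ) : ℂ))) '' Aset) ⊆ {1} := by
      rintro - ⟨x, hx, rfl⟩
      have hx2 := hx.2
      simp only [Set.mem_singleton_iff]
      have : (-2 * I * ((ψ x : ℝ) : ℂ)) = (-2 * Complex.I * (φ₁ x : ℂ))
          + (-(-2 * Complex.I * (φ₂ x : ℂ))) := by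
        push_cast [hψdef]
        ring
      rw [this, Complex.exp_add, hx2, ← Complex.exp_add]
      simp
    have := closure_mono himsub hmemim
    rwa [closure_singleton, Set.mem_singleton_iff] at this
  have hψπ : ∀ θ ∈ Set.Ioo t₀ (t₀ + 2 * Real.pi), ∃ m : ℤ, ψ θ = Real.pi * m := by
    intro θ hθ
    obtain ⟨n, hn⟩ := Complex.exp_eq_one_iff.1 (hζ1 θ hθ)
    refine ⟨-n, ?_⟩
    have h2 : (-2 : ℂ) * I ≠ 0 := by simp [Complex.I_ne_zero]
    have key : (-2 * I) * ((ψ θ : ℝ) : ℂ)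
        = (-2 * I) * (((Real.pi : ℝ) : ℂ) * ((-n : ℤ) : ℂ)) := by
      rw [hn]; push_cast; ring
    have := mul_left_cancel₀ h2 key
    exact_mod_cast this
  -- the constant value
  set cst : ℝ := ψ (t₀ + Real.pi) with hcstdef
  have hθref : t₀ + Real.pi ∈ Set.Ioo t₀ (t₀ + 2 * Real.pi) := by
    constructor <;> [linarith; linarith]
  have hψc : ∀ θ ∈ Set.Ioo t₀ (t₀ + 2 * Real.pi), ψ θ = cst :=
    fun θ hθ => aux_psi_const ψ hψcont hψπ θ hθ (t₀ + Real.pi) hθref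
  -- the radii sequence
  set ρ : ℕ → ℝ := fun k => 1 - ((k:ℝ) + 2)⁻¹ with hρdef
  have hρhalf : ∀ k, 1/2 ≤ ρ k := by
    intro k
    have h0 : (0:ℝ) ≤ (k:ℝ) := Nat.cast_nonneg k
    have h2 : ((k:ℝ) + 2)⁻¹ ≤ 2⁻¹ := by
      apply inv_anti₀ (by norm_num)
      linarith
    rw [hρdef]
    simp only []
    norm_num
    linarith
  have hρ1 : ∀ k, ρ k < 1 := by
    intro k
    have h0 : (0:ℝ) ≤ (k:ℝ) := Nat.cast_nonneg k
    have : (0:ℝ) < ((k:ℝ) + 2)⁻¹ := by positivity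
    rw [hρdef]
    simp only []
    linarith
  have hρ0 : ∀ k, 0 < ρ k := fun k => lt_of_lt_of_le (by norm_num) (hρhalf k)
  have hρlim : Filter.Tendsto ρ Filter.atTop (nhdsWithin 1 (Set.Iio 1)) := by
    apply tendsto_nhdsWithin_of_tendsto_nhds_of_eventually_within
    · have h1 : Filter.Tendsto (fun k : ℕ => ((k:ℝ) + 2)) Filter.atTop Filter.atTop :=
        Filter.tendsto_atTop_add_const_right _ 2 tendsto_natCast_atTop_atTop
      have h2 : Filter.Tendsto (fun k : ℕ => ((k:ℝ) + 2)⁻¹) Filter.atTop (nhds 0) :=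
        h1.inv_tendsto_atTop
      have h3 := (tendsto_const_nhds (x := (1:ℝ)) (f := Filter.atTop (α := ℕ))).sub h2
      simpa using h3
    · exact Filter.Eventually.of_forall fun k => hρ1 k
  -- the function u
  set u : ℕ → ℝ → ℝ := fun k θ => (h ((ρ k : ℂ) * Complex.exp (I * θ))).im with hudef
  have hucont : ∀ k, Continuous (u k) := by
    intro k
    apply Complex.continuous_im.comp
    exact hd.continuousOn.comp_continuous (by fun_prop) (hmem (ρ k) (hρ0 k).le (hρ1 k))
  -- periodicity helper
  have hper : ∀ G : ℝ → ℂ, (∀ θ : ℝ, G (θ + 2*Real.pi) = G θ) → Function.Periodic G (2*Real.pi) :=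
    fun G hG θ => hG θ
  have hexpper : ∀ θ : ℝ, Complex.exp (I * ((θ + 2*Real.pi : ℝ) : ℂ)) = Complex.exp (I * θ) := by
    intro θ
    rw [show (I : ℂ) * ((θ + 2*Real.pi : ℝ) : ℂ) = I * θ + 2*(Real.pi:ℂ)*I from by push_cast; ring,
      Complex.exp_add, Complex.exp_two_pi_mul_I, mul_one]
  -- L² bound on u
  have husq : ∀ k, (∫ θ in Set.Ioo t₀ (t₀ + 2*Real.pi), (u k θ) ^ 2) ≤ 4 * M := by
    intro k
    have hgsq : ∀ (g : ℂ → ℂ), DifferentiableOn ℂ g (ball (0:ℂ) 1) →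
        Continuous (fun θ : ℝ => ‖g ((ρ k : ℂ) * Complex.exp (I * θ))‖ ^ 2) := by
      intro g hg
      apply Continuous.pow
      apply continuous_norm.comp
      exact hg.continuousOn.comp_continuous (by fun_prop) (hmem (ρ k) (hρ0 k).le (hρ1 k))
    have huksq : Continuous (fun θ => (u k θ)^2) := ((hucont k).pow 2)
    have hper1 : Function.Periodic (fun θ => (u k θ)^2) (2*Real.pi) := by
      intro θ
      simp only [hudef]
      rw [hexpper θ]
    have e1 : (∫ θ in Set.Ioo t₀ (t₀ + 2*Real.pi), (u k θ) ^ 2)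
        = ∫ θ in t₀..(t₀ + 2*Real.pi), (u k θ)^2 := by
      rw [intervalIntegral.integral_of_le hab.le, integral_Ioc_eq_integral_Ioo]
    have e2 : (∫ θ in t₀..(t₀ + 2*Real.pi), (u k θ)^2)
        = ∫ θ in (0:ℝ)..(2*Real.pi), (u k θ)^2 := by
      have := hper1.intervalIntegral_add_eq t₀ 0
      simpa using this
    have e3 : (∫ θ in (0:ℝ)..(2*Real.pi), (u k θ)^2)
        ≤ ∫ θ in (0:ℝ)..(2*Real.pi),
            (2 * ‖g₁ ((ρ k : ℂ) * Complex.exp (I * θ))‖ ^ 2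
              + 2 * ‖g₂ ((ρ k : ℂ) * Complex.exp (I * θ))‖ ^ 2) := by
      apply intervalIntegral.integral_mono_on (by positivity)
        (huksq.intervalIntegrable _ _)
        (((continuous_const.mul (hgsq g₁ hg₁)).add (continuous_const.mul (hgsq g₂ hg₂))).intervalIntegrable _ _)
      intro θ hθ
      set z := (ρ k : ℂ) * Complex.exp (I * θ)
      have him : |(h z).im| ≤ ‖g₁ z‖ + ‖g₂ z‖ := by
        calc |(h z).im| ≤ ‖h z‖ := Complex.abs_im_le_norm _
          _ ≤ _ := norm_sub_le _ _
      have h1 : |(h z).im| ^ 2 ≤ (‖g₁ z‖ + ‖g₂ z‖) ^ 2 :=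
        pow_le_pow_left₀ (abs_nonneg _) him 2
      rw [_root_.sq_abs] at h1
      show (h z).im ^ 2 ≤ 2 * ‖g₁ z‖ ^ 2 + 2 * ‖g₂ z‖ ^ 2
      nlinarith [sq_nonneg (‖g₁ z‖ - ‖g₂ z‖)]
    have e4 : (∫ θ in (0:ℝ)..(2*Real.pi),
            (2 * ‖g₁ ((ρ k : ℂ) * Complex.exp (I * θ))‖ ^ 2
              + 2 * ‖g₂ ((ρ k : ℂ) * Complex.exp (I * θ))‖ ^ 2)) ≤ 4 * M := by
      rw [intervalIntegral.integral_add
        (((hgsq g₁ hg₁).intervalIntegrable _ _).const_mul 2)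
        (((hgsq g₂ hg₂).intervalIntegrable _ _).const_mul 2),
        intervalIntegral.integral_const_mul, intervalIntegral.integral_const_mul]
      have hM1 := (hM (ρ k) (hρ0 k) (hρ1 k)).1
      have hM2 := (hM (ρ k) (hρ0 k) (hρ1 k)).2
      linarith
    rw [e1, e2]
    exact le_trans e3 e4
  -- a.e. convergence of u towards cst
  have huae : ∀ᵐ θ ∂(volume.restrict (Set.Ioo t₀ (t₀ + 2*Real.pi))),
      Filter.Tendsto (fun k => u k θ) Filter.atTop (nhds cst) := by
    filter_upwards [hb₁, hb₂, ae_restrict_mem measurableSet_Ioo] with θ h1 h2 hθS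
    have h3 := (h1.sub h2).comp hρlim
    have h4 : (fun k => u k θ)
        = fun k => (g₁ ((ρ k : ℂ) * Complex.exp (I * θ))).im
            - (g₂ ((ρ k : ℂ) * Complex.exp (I * θ))).im := by
      funext k
      simp [hudef, hhdef, Complex.sub_im]
    rw [h4, show cst = φ₁ θ - φ₂ θ from (hψc θ hθS).symm]
    exact h3
  have hL1 := aux_vitali hab u hucont cst (4*M) husq huae
  -- vanishing of the circle-integral coefficients
  have hQ : ∀ n : ℕ, 1 ≤ n →
      (∮ z in C((0:ℂ), (1/2:ℝ)), z⁻¹ ^ n • (z⁻¹ • h z)) = 0 := by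
    intro n hn
    obtain ⟨m, rfl⟩ : ∃ m, n = m + 1 := ⟨n - 1, (Nat.succ_pred_eq_of_pos hn).symm⟩
    set Q : ℂ := ∮ z in C((0:ℂ), (1/2:ℝ)), z⁻¹ ^ (m+1) • (z⁻¹ • h z) with hQdef
    set e : ℝ → ℂ := fun θ => Complex.exp (((m:ℂ)+1) * θ * I) with hedef
    have hecont : Continuous e := by
      rw [hedef]; fun_prop
    have henorm : ∀ θ : ℝ, ‖e θ‖ = 1 := by
      intro θ
      rw [hedef]
      simp only []
      rw [show ((m:ℂ)+1) * θ * I = ((((m:ℝ)+1) * θ : ℝ) : ℂ) * I from by push_cast; ring]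
      exact Complex.norm_exp_ofReal_mul_I _
    have heper : ∀ θ : ℝ, e (θ + 2*Real.pi) = e θ := by
      intro θ
      rw [hedef]
      simp only []
      rw [show ((m:ℂ)+1) * ((θ + 2*Real.pi : ℝ) : ℂ) * I
          = ((m:ℂ)+1) * θ * I + ((m:ℤ)+1 : ℤ) * (2 * (Real.pi:ℂ) * I) from by push_cast; ring,
        Complex.exp_add, Complex.exp_int_mul_two_pi_mul_I, mul_one]
    set J : ℕ → ℂ := fun k =>
      ∫ θ in Set.Ioo t₀ (t₀ + 2*Real.pi), ((u k θ : ℝ) : ℂ) * e θ with hJdef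
    -- J k equals the aux_W expression
    have hJeq : ∀ k, J k = -(1/2) * ((ρ k : ℝ) : ℂ)^(m+1) * (starRingEnd ℂ) Q := by
      intro k
      have hGdef : ∀ θ : ℝ, ((u k θ : ℝ) : ℂ) * e θ
          = ((h ((ρ k : ℂ) * Complex.exp ((θ:ℂ) * I))).im : ℂ)
              * Complex.exp (((m:ℂ)+1) * θ * I) := by
        intro θ
        rw [hudef, hedef]
        simp only []
        rw [mul_comm ((θ:ℂ)) I]
      have hGper : Function.Periodic (fun θ : ℝ => ((u k θ : ℝ) : ℂ) * e θ) (2*Real.pi) := by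
        intro θ
        simp only [hudef]
        rw [heper θ, hexpper θ]
      calc J k = ∫ θ in t₀..(t₀ + 2*Real.pi), ((u k θ : ℝ) : ℂ) * e θ := by
            rw [intervalIntegral.integral_of_le hab.le, integral_Ioc_eq_integral_Ioo]
        _ = ∫ θ in (0:ℝ)..(2*Real.pi), ((u k θ : ℝ) : ℂ) * e θ := by
            have := hGper.intervalIntegral_add_eq t₀ 0
            simpa using this
        _ = ∫ θ in (0:ℝ)..(2*Real.pi),
              ((h ((ρ k : ℂ) * Complex.exp ((θ:ℂ) * I))).im : ℂ)
                * Complex.exp (((m:ℂ)+1) * θ * I) :=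
            intervalIntegral.integral_congr fun θ _ => hGdef θ
        _ = -(1/2) * ((ρ k : ℝ) : ℂ)^(m+1) * (starRingEnd ℂ) Q :=
            aux_W hd (hρhalf k) (hρ1 k) m
    -- J tends to 0
    have hInt : ∀ k, IntegrableOn (fun θ => ((u k θ : ℝ) : ℂ) * e θ)
        (Set.Ioo t₀ (t₀ + 2*Real.pi)) volume := by
      intro k
      have : Continuous (fun θ => ((u k θ : ℝ) : ℂ) * e θ) := by
        exact (Complex.continuous_ofReal.comp (hucont k)).mul hecont
      exact this.integrableOn_Icc.mono_set Set.Ioo_subset_Icc_self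
    have hIntc : IntegrableOn (fun θ : ℝ => ((cst : ℝ) : ℂ) * e θ)
        (Set.Ioo t₀ (t₀ + 2*Real.pi)) volume := by
      have : Continuous (fun θ : ℝ => ((cst : ℝ) : ℂ) * e θ) := continuous_const.mul hecont
      exact this.integrableOn_Icc.mono_set Set.Ioo_subset_Icc_self
    have hJc0 : (∫ θ in Set.Ioo t₀ (t₀ + 2*Real.pi), ((cst : ℝ) : ℂ) * e θ) = 0 := by
      have hc' : ((m:ℂ)+1) * I ≠ 0 := by
        apply mul_ne_zero _ Complex.I_ne_zero
        norm_cast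
      calc (∫ θ in Set.Ioo t₀ (t₀ + 2*Real.pi), ((cst : ℝ) : ℂ) * e θ)
          = ∫ θ in t₀..(t₀ + 2*Real.pi), ((cst : ℝ) : ℂ) * e θ := by
            rw [intervalIntegral.integral_of_le hab.le, integral_Ioc_eq_integral_Ioo]
        _ = (cst : ℂ) * ∫ θ in t₀..(t₀ + 2*Real.pi), Complex.exp ((((m:ℂ)+1) * I) * θ) := by
            rw [← intervalIntegral.integral_const_mul]
            refine intervalIntegral.integral_congr fun θ _ => ?_
            rw [hedef]
            simp only []
            rw [show ((m:ℂ)+1) * θ * I = (((m:ℂ)+1) * I) * θ from by ring]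
        _ = 0 := by
            rw [integral_exp_mul_complex hc']
            have hper2 : Complex.exp ((((m:ℂ)+1) * I) * ((t₀ + 2*Real.pi : ℝ):ℂ))
                = Complex.exp ((((m:ℂ)+1) * I) * (t₀:ℂ)) := by
              rw [show (((m:ℂ)+1) * I) * ((t₀ + 2*Real.pi : ℝ):ℂ)
                  = (((m:ℂ)+1) * I) * (t₀:ℂ) + ((m:ℤ)+1 : ℤ) * (2*(Real.pi:ℂ)*I) from by
                    push_cast; ring,
                Complex.exp_add, Complex.exp_int_mul_two_pi_mul_I, mul_one]
            rw [hper2, sub_self, zero_div, mul_zero]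
    -- J tends to zero
    have hJ0 : Filter.Tendsto J Filter.atTop (nhds 0) := by
      apply squeeze_zero_norm _ hL1
      intro k
      have hdiff : J k = ∫ θ in Set.Ioo t₀ (t₀ + 2*Real.pi),
          (((u k θ - cst : ℝ) : ℂ)) * e θ := by
        rw [hJdef]
        simp only []
        rw [← sub_zero (∫ θ in Set.Ioo t₀ (t₀ + 2*Real.pi), ((u k θ : ℝ) : ℂ) * e θ), ← hJc0,
          ← integral_sub (hInt k) hIntc]
        congr 1
        funext θ
        push_cast
        ring
      rw [hdiff]
      refine le_trans (norm_integral_le_integral_norm _) (le_of_eq ?_)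
      refine integral_congr_ae (Filter.Eventually.of_forall fun θ => ?_)
      show ‖(((u k θ - cst : ℝ)) : ℂ) * e θ‖ = |u k θ - cst|
      rw [norm_mul, henorm θ, mul_one, Complex.norm_real, Real.norm_eq_abs]
    -- limit of the explicit formula
    have hcast : Filter.Tendsto (fun k => ((ρ k : ℝ) : ℂ)) Filter.atTop (nhds 1) := by
      have h1 : Filter.Tendsto ρ Filter.atTop (nhds 1) := hρlim.mono_right nhdsWithin_le_nhds
      have h2 := (Complex.continuous_ofReal.tendsto 1).comp h1
      simpa [Function.comp_def] using h2
    have hJlim : Filter.Tendsto (fun k => -(1/2) * ((ρ k : ℝ) : ℂ)^(m+1) * (starRingEnd ℂ) Q)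
        Filter.atTop (nhds (-(1/2) * 1^(m+1) * (starRingEnd ℂ) Q)) :=
      ((hcast.pow (m+1)).const_mul (-(1/2:ℂ))).mul_const _
    have hJ0' : Filter.Tendsto (fun k => -(1/2) * ((ρ k : ℝ) : ℂ)^(m+1) * (starRingEnd ℂ) Q)
        Filter.atTop (nhds 0) := by
      have : J = fun k => -(1/2) * ((ρ k : ℝ) : ℂ)^(m+1) * (starRingEnd ℂ) Q := funext hJeq
      rw [← this]
      exact hJ0
    have heq := tendsto_nhds_unique hJ0' hJlim
    have hconjQ : (starRingEnd ℂ) Q = 0 := by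
      rw [one_pow] at heq
      linear_combination (2 : ℂ) * heq
    rw [hQdef]
    calc Q = (starRingEnd ℂ) ((starRingEnd ℂ) Q) := (Complex.conj_conj Q).symm
      _ = 0 := by rw [hconjQ, map_zero]
  have hconst := aux_const hd hQ
  -- conclusion
  have hexp1 : Complex.exp (h 0) = 1 := by
    haveI hne : (nhdsWithin (0:ℂ) (ball (0 : ℂ) 1 \ {0})).NeBot := by
      have h1 : ball (0 : ℂ) 1 \ {0} = ball (0 : ℂ) 1 ∩ {(0:ℂ)}ᶜ := Set.diff_eq _ _
      rw [h1, nhdsWithin_inter_of_mem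
        (mem_nhdsWithin_of_mem_nhds (ball_mem_nhds _ one_pos))]
      exact inferInstance
    have heqev : ∀ᶠ k in nhdsWithin (0:ℂ) (ball (0 : ℂ) 1 \ {0}),
        f₁ k = Complex.exp (h 0) * f₂ k := by
      filter_upwards [self_mem_nhdsWithin] with k hk
      have hkb := hk.1
      have hk0 : h k = h 0 := hconst k hkb
      calc f₁ k = Complex.exp (g₁ k) := (he₁ k hkb).symm
        _ = Complex.exp (h k + g₂ k) := by
            congr 1
            rw [hhdef]
            ring
        _ = Complex.exp (h 0) * Complex.exp (g₂ k) := by rw [hk0, Complex.exp_add]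
        _ = Complex.exp (h 0) * f₂ k := by rw [he₂ k hkb]
    have h2 : Filter.Tendsto f₁ (nhdsWithin (0:ℂ) (ball (0 : ℂ) 1 \ {0}))
        (nhds (Complex.exp (h 0) * 1)) :=
      Filter.Tendsto.congr' (Filter.EventuallyEq.symm heqev) (hlim₂.const_mul _)
    have := tendsto_nhds_unique hlim₁ h2
    rw [mul_one] at this
    exact this.symm
  intro z hz
  have hzk : h z = h 0 := hconst z hz
  calc f₁ z = Complex.exp (g₁ z) := (he₁ z hz).symm
    _ = Complex.exp (h z + g₂ z) := by
        congr 1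
        rw [hhdef]
        ring
    _ = Complex.exp (h 0) * Complex.exp (g₂ z) := by rw [hzk, Complex.exp_add]
    _ = f₂ z := by rw [hexp1, one_mul, he₂ z hz]
end
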